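/- Let N be a natural number, A : Fin N → Fin N → ℝ a symmetric matrix, and suppose: (i) there exists W : Fin N → ℝ³ (Euclidean inner product space) such that for all i ≠ j, A i j > 0 if and only if ⟪W i, W j⟫ > 0 (A has a rank-3 sign representation); and (ii) every node is non-isolated, i.e., for every i there exists j ≠ i with A i j > 0 (implied by connectedness of the graph). Then for every real number x ≠ 0 there exist k, k' : Fin N → ℝ such that for all i ≠ j, A i j > 0 if and only if cos(k i · x)·cos(k j · x)·cos((k' i − k' j)·x) + sin(k i · x)·sin(k j · x) > 0. -/

import Mathlib

open scoped RealInnerProductSpace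

private lemma exists_spherical (a b c : ℝ) (h : a ^ 2 + b ^ 2 + c ^ 2 = 1) :
    ∃ θ φ : ℝ, a = Real.cos θ * Real.sin φ ∧ b = Real.cos θ * Real.cos φ ∧
      c = Real.sin θ := by
  have hc2 : c ^ 2 ≤ 1 := by nlinarith [sq_nonneg a, sq_nonneg b]
  have hc1 : -1 ≤ c := by nlinarith
  have hc1' : c ≤ 1 := by nlinarith
  set θ := Real.arcsin c with hθ
  have hsin : Real.sin θ = c := Real.sin_arcsin hc1 hc1'
  have hcos : Real.cos θ = Real.sqrt (a ^ 2 + b ^ 2) := by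
    rw [Real.cos_arcsin]
    congr 1
    nlinarith
  by_cases hz : a = 0 ∧ b = 0
  · refine ⟨θ, 0, ?_, ?_, hsin.symm⟩
    · simp [hz.1]
    · rw [hcos, hz.1, hz.2]; simp
  · set z : ℂ := ⟨b, a⟩ with hzdef
    have hz0 : z ≠ 0 := by
      intro h0
      exact hz ⟨congrArg Complex.im h0, congrArg Complex.re h0⟩
    have habs : ‖z‖ = Real.sqrt (a ^ 2 + b ^ 2) := by
      rw [Complex.norm_def, Complex.normSq_apply]
      simp only [hzdef]
      ring_nf
    have habs0 : ‖z‖ ≠ 0 := by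
      simpa using hz0
    refine ⟨θ, z.arg, ?_, ?_, hsin.symm⟩
    · rw [hcos, ← habs, Complex.sin_arg z]
      field_simp [hzdef]; rfl
    · rw [hcos, ← habs, Complex.cos_arg hz0]
      field_simp [hzdef]; rfl

theorem rank_three_graphs_trig_representable
    (N : ℕ) (A : Fin N → Fin N → ℝ)
    (hsymm : ∀ i j, A i j = A j i)
    (W : Fin N → EuclideanSpace ℝ (Fin 3))
    (hrep : ∀ i j, i ≠ j → (A i j > 0 ↔ ⟪W i, W j⟫ > 0))
    (hconn : ∀ i, ∃ j, j ≠ i ∧ A i j > 0)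
    (x : ℝ) (hx : x ≠ 0) :
    ∃ k k' : Fin N → ℝ, ∀ i j, i ≠ j →
      (A i j > 0 ↔
        Real.cos (k i * x) * Real.cos (k j * x) * Real.cos ((k' i - k' j) * x)
          + Real.sin (k i * x) * Real.sin (k j * x) > 0) := by
  -- every W i is nonzero
  have hW0 : ∀ i, W i ≠ 0 := by
    intro i hWi
    obtain ⟨j, hji, hA⟩ := hconn i
    have := (hrep i j (Ne.symm hji)).mp hA
    rw [hWi] at this
    simp at this
  -- normalized vectors
  set v : Fin N → EuclideanSpace ℝ (Fin 3) := fun i => (‖W i‖)⁻¹ • W i with hv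
  have hvnorm : ∀ i, ‖v i‖ = 1 := by
    intro i
    rw [hv]
    simp [norm_smul, abs_of_nonneg (norm_nonneg (W i)),
      inv_mul_cancel₀ (norm_ne_zero_iff.mpr (hW0 i))]
  have hvsum : ∀ i, (v i 0) ^ 2 + (v i 1) ^ 2 + (v i 2) ^ 2 = 1 := by
    intro i
    have h1 : ‖v i‖ = Real.sqrt (∑ t, v i t ^ 2) := by
      rw [EuclideanSpace.norm_eq]; simp [sq]
    have h2 : Real.sqrt (∑ t, v i t ^ 2) = 1 := by rw [← h1, hvnorm]
    have h3 : (∑ t, v i t ^ 2) = 1 := by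
      have hnn : (0:ℝ) ≤ ∑ t, v i t ^ 2 :=
        Finset.sum_nonneg fun t _ => sq_nonneg _
      nlinarith [Real.sq_sqrt hnn]
    simpa [Fin.sum_univ_three] using h3
  -- pick spherical coordinates
  choose θ φ hθφ using fun i => exists_spherical _ _ _ (hvsum i)
  refine ⟨fun i => θ i / x, fun i => φ i / x, fun i j hij => ?_⟩
  have hkx : ∀ i, θ i / x * x = θ i := fun i => div_mul_cancel₀ _ hx
  have hk'x : (φ i / x - φ j / x) * x = φ i - φ j := by
    field_simp
  rw [hrep i j hij, hkx, hkx, hk'x]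
  -- inner product of normalized vectors
  have hinner : ⟪v i, v j⟫ = Real.cos (θ i) * Real.cos (θ j) *
      Real.cos (φ i - φ j) + Real.sin (θ i) * Real.sin (θ j) := by
    have : ⟪v i, v j⟫ = v i 0 * v j 0 + v i 1 * v j 1 + v i 2 * v j 2 := by
      simp [PiLp.inner_apply, Fin.sum_univ_three]; ring
    rw [this, (hθφ i).1, (hθφ i).2.1, (hθφ i).2.2, (hθφ j).1, (hθφ j).2.1,
      (hθφ j).2.2, Real.cos_sub]
    ring
  rw [← hinner]
  have hsc : ⟪v i, v j⟫ = (‖W i‖)⁻¹ * (‖W j‖)⁻¹ * ⟪W i, W j⟫ := by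
    rw [hv]
    simp only [real_inner_smul_left, real_inner_smul_right]
    ring
  rw [hsc]
  constructor
  · intro h
    exact mul_pos (mul_pos (inv_pos.mpr (norm_pos_iff.mpr (hW0 i)))
      (inv_pos.mpr (norm_pos_iff.mpr (hW0 j)))) h
  · intro h
    by_contra h'
    push_neg at h'
    have hi : (0:ℝ) < (‖W i‖)⁻¹ := inv_pos.mpr (norm_pos_iff.mpr (hW0 i))
    have hj : (0:ℝ) < (‖W j‖)⁻¹ := inv_pos.mpr (norm_pos_iff.mpr (hW0 j))
    have := mul_nonpos_of_nonneg_of_nonpos (le_of_lt (mul_pos hi hj)) h'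
    rw [mul_assoc] at this
    linarith
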